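/- For every even integer n ≥ 2, the local antimagic chromatic number of the peanut graph Pt(n) equals 3, i.e., χ_la(Pt(n)) = 3. -/

import Mathlib

namespace LocalAntimagic

variable {V W : Type*}

/-- Induced vertex label: sum of edge labels over edges incident to `v`. -/
noncomputable def fplus (G : SimpleGraph V) (f : Sym2 V → ℕ) (v : V) : ℕ :=
  ∑ᶠ e ∈ G.incidenceSet v, f e

/-- `f` is a local antimagic labeling of `G`: a bijection from the edge set onto
`{1, …, q}` (`q` the number of edges) whose induced vertex labels distinguish
adjacent vertices. -/
def IsLocalAntimagic (G : SimpleGraph V) (f : Sym2 V → ℕ) : Prop :=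
  Set.BijOn f G.edgeSet (Set.Icc 1 G.edgeSet.ncard) ∧
  ∀ ⦃u w : V⦄, G.Adj u w → fplus G f u ≠ fplus G f w

/-- The local antimagic chromatic number: the least number of distinct induced
vertex labels over all local antimagic labelings. -/
noncomputable def chiLA (G : SimpleGraph V) : ℕ :=
  sInf {c : ℕ | ∃ f : Sym2 V → ℕ, IsLocalAntimagic G f ∧ (Set.range (fplus G f)).ncard = c}

/-- `n` disjoint copies of the path `P₃`; in copy `i`, vertex `(i,0) = uᵢ`,
`(i,1) = wᵢ`, `(i,2) = vᵢ`. -/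
def nP3 (n : ℕ) : SimpleGraph (Fin n × Fin 3) :=
  SimpleGraph.fromRel (fun x y => x.1 = y.1 ∧ ((x.2 = 0 ∧ y.2 = 1) ∨ (x.2 = 1 ∧ y.2 = 2)))

/-- Join of two graphs on disjoint vertex sets. -/
def joinG {α β : Type*} (G : SimpleGraph α) (H : SimpleGraph β) : SimpleGraph (α ⊕ β) :=
  SimpleGraph.fromRel (fun x y =>
    match x, y with
    | Sum.inl a, Sum.inl b => G.Adj a b
    | Sum.inr a, Sum.inr b => H.Adj a b
    | Sum.inl _, Sum.inr _ => True
    | Sum.inr _, Sum.inl _ => False)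

/-- Disjoint union of two graphs. -/
def disjUnionG {α β : Type*} (G : SimpleGraph α) (H : SimpleGraph β) : SimpleGraph (α ⊕ β) :=
  SimpleGraph.fromRel (fun x y =>
    match x, y with
    | Sum.inl a, Sum.inl b => G.Adj a b
    | Sum.inr a, Sum.inr b => H.Adj a b
    | _, _ => False)

/-- `m` disjoint copies of `G`. -/
def copies (m : ℕ) (G : SimpleGraph V) : SimpleGraph (Fin m × V) :=
  SimpleGraph.fromRel (fun x y => x.1 = y.1 ∧ G.Adj x.2 y.2)

/-- The fan blade graph `FB(n) = nP₃ ∨ O₁`. -/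
def FB (n : ℕ) : SimpleGraph ((Fin n × Fin 3) ⊕ Fin 1) :=
  joinG (nP3 n) ⊥

/-- The graph obtained from `G` by merging vertices according to `p` (fibers of
`p` are merged into single vertices). -/
def mergeMap (G : SimpleGraph V) (p : V → W) : SimpleGraph W :=
  SimpleGraph.fromRel (fun a b => ∃ x y, G.Adj x y ∧ p x = a ∧ p y = b)

/-- No two distinct vertices of `S` are adjacent or share a common neighbor. -/
def NoCommon (G : SimpleGraph V) (S : Set V) : Prop :=
  ∀ x ∈ S, ∀ y ∈ S, x ≠ y → ¬ G.Adj x y ∧ ∀ z, ¬ (G.Adj x z ∧ G.Adj y z)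

/-- `P` is a partition of the set `S` into nonempty blocks. -/
def IsPartitionOn (S : Set V) (P : Set (Set V)) : Prop :=
  (∀ B ∈ P, B ⊆ S) ∧ (∀ v ∈ S, ∃! B, B ∈ P ∧ v ∈ B) ∧ ∀ B ∈ P, B.Nonempty

/-- `p` identifies exactly the vertices lying in a common block of `P`,
and nothing else; `p` is surjective so the codomain is exactly the merged
vertex set. -/
def IsMergeOf (P : Set (Set V)) (p : V → W) : Prop :=
  Function.Surjective p ∧ ∀ x y : V, p x = p y ↔ (x = y ∨ ∃ B ∈ P, x ∈ B ∧ y ∈ B)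


/-- The diamond fan `DF(2s)`: two copies (`c = 0,1`) of `sP₃`, plus two hub
vertices `y = Sum.inr 0` and `z = Sum.inr 1`; in copy `c`, blade `j`, position
`0,2` are the degree-1 endpoints and `1` the middle vertex of the path. -/
def DF2 (s : ℕ) : SimpleGraph ((Fin 2 × Fin s × Fin 3) ⊕ Fin 2) :=
  SimpleGraph.fromRel (fun x y =>
    match x, y with
    | Sum.inl a, Sum.inl b =>
        a.1 = b.1 ∧ a.2.1 = b.2.1 ∧ ((a.2.2 = 0 ∧ b.2.2 = 1) ∨ (a.2.2 = 1 ∧ b.2.2 = 2))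
    | Sum.inl a, Sum.inr j =>
        (j = 0 ∧ ((a.1 = 0 ∧ a.2.2 ≠ 1) ∨ (a.1 = 1 ∧ a.2.2 = 1))) ∨
        (j = 1 ∧ ((a.1 = 1 ∧ a.2.2 ≠ 1) ∨ (a.1 = 0 ∧ a.2.2 = 1)))
    | _, _ => False)

abbrev DFVert (r s : ℕ) :=
  (Fin r × ((Fin 2 × Fin s × Fin 3) ⊕ Fin 2)) ⊕ ((Fin s × Fin 3) ⊕ Fin 1)

/-- Peanut graph `Pt(n)`: `Sum.inl (i, 0) = u_{i+1}`, `Sum.inl (i, 1) = v_{i+1}`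
for `0 ≤ i ≤ 2n`, and `Sum.inr 0 = x`, `Sum.inr 1 = y`. -/
abbrev PtVert (n : ℕ) := (Fin (2*n+1) × Fin 2) ⊕ Fin 2

def Pt (n : ℕ) : SimpleGraph (PtVert n) :=
  SimpleGraph.fromRel (fun a b =>
    match a, b with
    | Sum.inl p, Sum.inl q =>
        (p.2 = q.2 ∧ (p.1 : ℕ) + 1 = (q.1 : ℕ)) ∨
        (p.1 = q.1 ∧ (p.1 : ℕ) % 2 = 0 ∧ p.2 = 0 ∧ q.2 = 1)
    | Sum.inr j, Sum.inl p => (j = 0 ∧ (p.1 : ℕ) = 0) ∨ (j = 1 ∧ (p.1 : ℕ) = 2*n)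
    | _, _ => False)

/-- Triangular bracelet `TB(n)`: `Sum.inl (j, 0) = u_{2j+1}`,
`Sum.inl (j, 1) = v_{2j+1}` for `0 ≤ j ≤ n`, and `Sum.inr j = z_{2j}`. -/
abbrev TBVert (n : ℕ) := (Fin (n+1) × Fin 2) ⊕ Fin (n+1)

def TB (n : ℕ) : SimpleGraph (TBVert n) :=
  SimpleGraph.fromRel (fun a b =>
    match a, b with
    | Sum.inl p, Sum.inl q => p.1 = q.1 ∧ p.2 = 0 ∧ q.2 = 1
    | Sum.inr j, Sum.inl p =>
        (p.1 : ℕ) = (j : ℕ) ∨ (p.1 : ℕ) + 1 = (j : ℕ) ∨ ((j : ℕ) = 0 ∧ (p.1 : ℕ) = n)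
    | _, _ => False)

/-- Disjoint union of an indexed family of graphs. -/
def sigmaG {ι : Type*} {Vf : ι → Type*} (G : ∀ a, SimpleGraph (Vf a)) :
    SimpleGraph (Σ a, Vf a) :=
  SimpleGraph.fromRel (fun x y =>
    ∃ h : x.1 = y.1, (G y.1).Adj (cast (congrArg Vf h) x.2) y.2)

/-- `FB¹(r,s)`: `Sum.inl (i,j) = w_{i,j}`, `Sum.inr (Sum.inl i) = xᵢ`,
`Sum.inr (Sum.inr (j,0)) = uⱼ`, `Sum.inr (Sum.inr (j,1)) = vⱼ`. -/
def FB1 (r s : ℕ) : SimpleGraph ((Fin r × Fin s) ⊕ (Fin r ⊕ (Fin s × Fin 2))) :=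
  SimpleGraph.fromRel (fun a b =>
    match a, b with
    | Sum.inl w, Sum.inr (Sum.inl x) => w.1 = x
    | Sum.inl w, Sum.inr (Sum.inr uv) => w.2 = uv.1
    | Sum.inr (Sum.inl _), Sum.inr (Sum.inr _) => True
    | _, _ => False)

/-- `FB²(r,s)`: `Sum.inl (i,j,0) = u_{i,j}`, `Sum.inl (i,j,1) = v_{i,j}`,
`Sum.inr (Sum.inl i) = xᵢ`, `Sum.inr (Sum.inr j) = wⱼ`. -/
def FB2 (r s : ℕ) : SimpleGraph ((Fin r × Fin s × Fin 2) ⊕ (Fin r ⊕ Fin s)) :=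
  SimpleGraph.fromRel (fun a b =>
    match a, b with
    | Sum.inl uv, Sum.inr (Sum.inl x) => uv.1 = x
    | Sum.inl uv, Sum.inr (Sum.inr w) => uv.2.1 = w
    | Sum.inr (Sum.inl _), Sum.inr (Sum.inr _) => True
    | _, _ => False)


/-- Label for the `u`-side path edges; index `i ∈ [0, 4m+1]`. -/
def pl (m i : ℕ) : ℕ :=
  if i % 4 = 0 then m + 1 - i / 4
  else if i % 4 = 1 then 4*m + 2 - i / 4
  else if i % 4 = 2 then 4*m + 3 + i / 4
  else 7*m + 5 + i / 4

/-- Label for the `v`-side path edges. -/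
def ql (m i : ℕ) : ℕ :=
  if i % 4 = 0 then 7*m + 4 - i / 4
  else if i % 4 = 1 then 6*m + 3 - i / 4
  else if i % 4 = 2 then 2*m + 2 + i / 4
  else m + 2 + i / 4

/-- Label for the cross edges `u_{i+1} v_{i+1}` (`i` even). -/
def gl (m i : ℕ) : ℕ := if i % 4 = 0 then 8*m + 5 + i / 2 else 10*m + 5 - i / 2

/-- Side-dependent path label. -/
def cl (m : ℕ) (c : Fin 2) (i : ℕ) : ℕ := if c = 0 then pl m i else ql m i

/-- The directed labeling function. -/
def lab (m : ℕ) {n : ℕ} : PtVert n → PtVert n → ℕ := fun a b =>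
  match a, b with
  | Sum.inl p, Sum.inl q =>
      if p.2 = q.2 ∧ (p.1 : ℕ) + 1 = (q.1 : ℕ) then cl m q.2 (q.1 : ℕ)
      else if (p.1 : ℕ) = (q.1 : ℕ) ∧ p.2 = 0 ∧ q.2 = 1 then gl m (p.1 : ℕ)
      else 0
  | Sum.inr _, Sum.inl p => if (p.1 : ℕ) = 0 then cl m p.2 0 else cl m p.2 (4*m+1)
  | _, _ => 0

noncomputable def fm (m : ℕ) {n : ℕ} : Sym2 (PtVert n) → ℕ :=
  Sym2.lift ⟨fun a b => lab m a b + lab m b a, fun a b => by simp [Nat.add_comm]⟩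

@[simp] lemma fm_mk (m : ℕ) {n : ℕ} (a b : PtVert n) :
    fm m s(a, b) = lab m a b + lab m b a := rfl

lemma adj_iff {n : ℕ} (a b : PtVert n) :
    (Pt n).Adj a b ↔ a ≠ b ∧
      ((match a, b with
        | Sum.inl p, Sum.inl q =>
            (p.2 = q.2 ∧ (p.1 : ℕ) + 1 = (q.1 : ℕ)) ∨
            (p.1 = q.1 ∧ (p.1 : ℕ) % 2 = 0 ∧ p.2 = 0 ∧ q.2 = 1)
        | Sum.inr j, Sum.inl p => (j = 0 ∧ (p.1 : ℕ) = 0) ∨ (j = 1 ∧ (p.1 : ℕ) = 2*n)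
        | _, _ => False) ∨
       (match b, a with
        | Sum.inl p, Sum.inl q =>
            (p.2 = q.2 ∧ (p.1 : ℕ) + 1 = (q.1 : ℕ)) ∨
            (p.1 = q.1 ∧ (p.1 : ℕ) % 2 = 0 ∧ p.2 = 0 ∧ q.2 = 1)
        | Sum.inr j, Sum.inl p => (j = 0 ∧ (p.1 : ℕ) = 0) ∨ (j = 1 ∧ (p.1 : ℕ) = 2*n)
        | _, _ => False)) :=
  SimpleGraph.fromRel_adj _ a b
/-- The path edge with index `j ∈ [0, 4m+1]` on side `c` (`j = 0` is the `x`-edge,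
`j = 4m+1` the `y`-edge). -/
def ce (m : ℕ) (c : Fin 2) (j : ℕ) : Sym2 (PtVert (2*m)) :=
  if j = 0 then s(Sum.inr 0, Sum.inl (⟨0, by omega⟩, c))
  else if h : j ≤ 4*m then
    s(Sum.inl (⟨j-1, by omega⟩, c), Sum.inl (⟨j, by omega⟩, c))
  else s(Sum.inr 1, Sum.inl (⟨4*m, by omega⟩, c))

/-- The cross edge at even index `i ≤ 4m`. -/
def cre (m : ℕ) (i : ℕ) : Sym2 (PtVert (2*m)) :=
  if h : i ≤ 4*m then s(Sum.inl (⟨i, by omega⟩, 0), Sum.inl (⟨i, by omega⟩, 1))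
  else s(Sum.inl (⟨0, by omega⟩, 0), Sum.inl (⟨0, by omega⟩, 1))

lemma ce_mem (m : ℕ) (c : Fin 2) (j : ℕ) (hj : j ≤ 4*m+1) :
    ce m c j ∈ (Pt (2*m)).edgeSet := by
  rw [ce]
  split_ifs with h0 h4
  · rw [SimpleGraph.mem_edgeSet, adj_iff]
    exact ⟨by simp, Or.inl (Or.inl ⟨rfl, by simp⟩)⟩
  · rw [SimpleGraph.mem_edgeSet, adj_iff]
    refine ⟨by simp [Prod.ext_iff, Fin.ext_iff]; omega,
      Or.inl (Or.inl ⟨rfl, by simp; omega⟩)⟩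
  · rw [SimpleGraph.mem_edgeSet, adj_iff]
    exact ⟨by simp, Or.inl (Or.inr ⟨rfl, by simp; omega⟩)⟩

lemma cre_mem (m : ℕ) (i : ℕ) (hi : i ≤ 4*m) (hev : i % 2 = 0) :
    cre m i ∈ (Pt (2*m)).edgeSet := by
  rw [cre, dif_pos hi, SimpleGraph.mem_edgeSet, adj_iff]
  exact ⟨by simp, Or.inl (Or.inr ⟨rfl, by simpa using hev, rfl, rfl⟩)⟩

lemma mem_edgeSet_iff (m : ℕ) (e : Sym2 (PtVert (2*m))) :
    e ∈ (Pt (2*m)).edgeSet ↔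
      (∃ c : Fin 2, ∃ j : ℕ, j ≤ 4*m+1 ∧ e = ce m c j) ∨
      (∃ i : ℕ, i ≤ 4*m ∧ i % 2 = 0 ∧ e = cre m i) := by
  constructor
  · intro he
    induction e using Sym2.ind with
    | _ a b =>
      rw [SimpleGraph.mem_edgeSet, adj_iff] at he
      obtain ⟨hne, hr⟩ := he
      match a, b with
      | Sum.inl p, Sum.inl q =>
        obtain ⟨⟨pi, hpi⟩, pc⟩ := p
        obtain ⟨⟨qi, hqi⟩, qc⟩ := q
        simp only [Fin.ext_iff] at hr ⊢
        rcases hr with (⟨h1, h2⟩ | ⟨h1, h2, h3, h4⟩) | (⟨h1, h2⟩ | ⟨h1, h2, h3, h4⟩)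
        · left
          refine ⟨qc, qi, by omega, ?_⟩
          rw [ce, if_neg (by omega), dif_pos (by omega)]
          simp_all [Sym2.eq_iff, Prod.ext_iff, Fin.ext_iff]
          omega
        · right
          refine ⟨pi, by omega, by simpa using h2, ?_⟩
          rw [cre, dif_pos (by omega)]
          subst h1; obtain rfl : pc = 0 := Fin.ext h3; obtain rfl : qc = 1 := Fin.ext h4; rfl
        · left
          refine ⟨pc, pi, by omega, ?_⟩
          rw [ce, if_neg (by omega), dif_pos (by omega)]
          simp_all [Sym2.eq_iff, Prod.ext_iff, Fin.ext_iff]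
          omega
        · right
          refine ⟨qi, by omega, by simpa using h2, ?_⟩
          rw [cre, dif_pos (by omega)]
          subst h1; obtain rfl : qc = 0 := Fin.ext h3; obtain rfl : pc = 1 := Fin.ext h4; exact Sym2.eq_swap
      | Sum.inr j, Sum.inl p =>
        obtain ⟨⟨pi, hpi⟩, pc⟩ := p
        left
        rcases hr with (⟨h1, h2⟩ | ⟨h1, h2⟩) | h
        · refine ⟨pc, 0, by omega, ?_⟩
          rw [ce, if_pos rfl]
          subst h1; obtain rfl : pi = 0 := h2; rfl
        · refine ⟨pc, 4*m+1, by omega, ?_⟩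
          rw [ce, if_neg (by omega), dif_neg (by omega)]
          simp only [] at h2
          simp_all [Sym2.eq_iff, Prod.ext_iff, Fin.ext_iff]
          omega
        · exact h.elim
      | Sum.inl p, Sum.inr j =>
        obtain ⟨⟨pi, hpi⟩, pc⟩ := p
        left
        rcases hr with h | (⟨h1, h2⟩ | ⟨h1, h2⟩)
        · exact h.elim
        · refine ⟨pc, 0, by omega, ?_⟩
          rw [ce, if_pos rfl]
          subst h1; obtain rfl : pi = 0 := h2; exact Sym2.eq_swap
        · refine ⟨pc, 4*m+1, by omega, ?_⟩
          rw [ce, if_neg (by omega), dif_neg (by omega)]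
          simp only [] at h2
          simp_all [Sym2.eq_iff, Prod.ext_iff, Fin.ext_iff]
          omega
      | Sum.inr j, Sum.inr j' =>
        rcases hr with h | h <;> exact h.elim
  · rintro (⟨c, j, hj, rfl⟩ | ⟨i, hi, hev, rfl⟩)
    · exact ce_mem m c j hj
    · exact cre_mem m i hi hev
lemma fin2_cases (c : Fin 2) : c = 0 ∨ c = 1 := by revert c; decide

lemma lab_inl_inl (m : ℕ) {n : ℕ} (p q : Fin (2*n+1) × Fin 2) :
    lab m (Sum.inl p : PtVert n) (Sum.inl q) =
      if p.2 = q.2 ∧ (p.1 : ℕ) + 1 = (q.1 : ℕ) then cl m q.2 (q.1 : ℕ)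
      else if (p.1 : ℕ) = (q.1 : ℕ) ∧ p.2 = 0 ∧ q.2 = 1 then gl m (p.1 : ℕ)
      else 0 := rfl

lemma lab_inr_inl (m : ℕ) {n : ℕ} (j : Fin 2) (p : Fin (2*n+1) × Fin 2) :
    lab m (Sum.inr j : PtVert n) (Sum.inl p) =
      if (p.1 : ℕ) = 0 then cl m p.2 0 else cl m p.2 (4*m+1) := rfl

lemma lab_inl_inr (m : ℕ) {n : ℕ} (p : Fin (2*n+1) × Fin 2) (j : Fin 2) :
    lab m (Sum.inl p : PtVert n) (Sum.inr j) = 0 := rfl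

lemma lab_inr_inr (m : ℕ) {n : ℕ} (j j' : Fin 2) :
    lab m (Sum.inr j : PtVert n) (Sum.inr j') = 0 := rfl

lemma fm_ce (m : ℕ) (hm : 1 ≤ m) (c : Fin 2) (j : ℕ) (hj : j ≤ 4*m+1) :
    fm m (ce m c j) = cl m c j := by
  rw [ce]
  split_ifs with h0 h4
  · subst h0
    rw [fm_mk, lab_inr_inl, lab_inl_inr, if_pos (by simp), Nat.add_zero]
  · rw [fm_mk, lab_inl_inl, lab_inl_inl]
    rw [if_pos ⟨rfl, by simp; omega⟩, if_neg (by simp; omega),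
      if_neg (by simp; omega), Nat.add_zero]
  · have hj' : j = 4*m+1 := by omega
    subst hj'
    rw [fm_mk, lab_inr_inl, lab_inl_inr, if_neg (by simp; omega), Nat.add_zero]

lemma fm_cre (m : ℕ) (i : ℕ) (hi : i ≤ 4*m) (hev : i % 2 = 0) :
    fm m (cre m i) = gl m i := by
  rw [cre, dif_pos hi, fm_mk, lab_inl_inl, lab_inl_inl]
  rw [if_neg (by simp), if_pos (by simp), if_neg (by simp), if_neg (by simp), Nat.add_zero]

lemma pl_bounds (m : ℕ) (hm : 1 ≤ m) (j : ℕ) (hj : j ≤ 4*m+1) :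
    1 ≤ pl m j ∧ pl m j ≤ 8*m+4 := by
  rw [pl]; split_ifs <;> omega

lemma ql_bounds (m : ℕ) (hm : 1 ≤ m) (j : ℕ) (hj : j ≤ 4*m+1) :
    1 ≤ ql m j ∧ ql m j ≤ 8*m+4 := by
  rw [ql]; split_ifs <;> omega

lemma cl_bounds (m : ℕ) (hm : 1 ≤ m) (c : Fin 2) (j : ℕ) (hj : j ≤ 4*m+1) :
    1 ≤ cl m c j ∧ cl m c j ≤ 8*m+4 := by
  rcases fin2_cases c with rfl | rfl
  · rw [show cl m 0 j = pl m j from if_pos rfl]; exact pl_bounds m hm j hj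
  · rw [show cl m 1 j = ql m j from if_neg (by decide)]; exact ql_bounds m hm j hj

lemma gl_bounds (m : ℕ) (i : ℕ) (hi : i ≤ 4*m) (hev : i % 2 = 0) :
    8*m+5 ≤ gl m i ∧ gl m i ≤ 10*m+5 := by
  rw [gl]; split_ifs <;> omega

lemma pl_inj (m : ℕ) (hm : 1 ≤ m) (j j' : ℕ) (hj : j ≤ 4*m+1) (hj' : j' ≤ 4*m+1)
    (h : pl m j = pl m j') : j = j' := by
  rw [pl, pl] at h; split_ifs at h <;> omega

lemma ql_inj (m : ℕ) (hm : 1 ≤ m) (j j' : ℕ) (hj : j ≤ 4*m+1) (hj' : j' ≤ 4*m+1)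
    (h : ql m j = ql m j') : j = j' := by
  rw [ql, ql] at h; split_ifs at h <;> omega

lemma pl_ne_ql (m : ℕ) (hm : 1 ≤ m) (j j' : ℕ) (hj : j ≤ 4*m+1) (hj' : j' ≤ 4*m+1) :
    pl m j ≠ ql m j' := by
  rw [pl, ql]; split_ifs <;> omega

lemma cl_inj (m : ℕ) (hm : 1 ≤ m) (c c' : Fin 2) (j j' : ℕ) (hj : j ≤ 4*m+1)
    (hj' : j' ≤ 4*m+1) (h : cl m c j = cl m c' j') : c = c' ∧ j = j' := by
  have e0 : ∀ k, cl m 0 k = pl m k := fun k => if_pos rfl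
  have e1 : ∀ k, cl m 1 k = ql m k := fun k => if_neg (by decide)
  rcases fin2_cases c with rfl | rfl <;> rcases fin2_cases c' with rfl | rfl
  · rw [e0, e0] at h; exact ⟨rfl, pl_inj m hm j j' hj hj' h⟩
  · rw [e0, e1] at h; exact absurd h (pl_ne_ql m hm j j' hj hj')
  · rw [e1, e0] at h; exact absurd h.symm (pl_ne_ql m hm j' j hj' hj)
  · rw [e1, e1] at h; exact ⟨rfl, ql_inj m hm j j' hj hj' h⟩

lemma gl_inj (m : ℕ) (i i' : ℕ) (hi : i ≤ 4*m) (hi' : i' ≤ 4*m)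
    (hev : i % 2 = 0) (hev' : i' % 2 = 0) (h : gl m i = gl m i') : i = i' := by
  rw [gl, gl] at h; split_ifs at h <;> omega
lemma cl0 (m j : ℕ) : cl m 0 j = pl m j := if_pos rfl
lemma cl1 (m j : ℕ) : cl m 1 j = ql m j := if_neg (by decide)

lemma fm_bijOn (m : ℕ) (hm : 1 ≤ m) :
    Set.BijOn (fm m) (Pt (2*m)).edgeSet (Set.Icc 1 (10*m+5)) := by
  refine ⟨?_, ?_, ?_⟩
  · intro e he
    rcases (mem_edgeSet_iff m e).1 he with ⟨c, j, hj, rfl⟩ | ⟨i, hi, hev, rfl⟩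
    · rw [fm_ce m hm c j hj]
      have := cl_bounds m hm c j hj
      exact ⟨by omega, by omega⟩
    · rw [fm_cre m i hi hev]
      have := gl_bounds m i hi hev
      exact ⟨by omega, by omega⟩
  · intro e1 h1 e2 h2 hf
    rcases (mem_edgeSet_iff m e1).1 h1 with ⟨c, j, hj, rfl⟩ | ⟨i, hi, hev, rfl⟩ <;>
      rcases (mem_edgeSet_iff m e2).1 h2 with ⟨c', j', hj', rfl⟩ | ⟨i', hi', hev', rfl⟩
    · rw [fm_ce m hm c j hj, fm_ce m hm c' j' hj'] at hf
      obtain ⟨rfl, rfl⟩ := cl_inj m hm c c' j j' hj hj' hf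
      rfl
    · rw [fm_ce m hm c j hj, fm_cre m i' hi' hev'] at hf
      have h1 := cl_bounds m hm c j hj
      have h2 := gl_bounds m i' hi' hev'
      omega
    · rw [fm_cre m i hi hev, fm_ce m hm c' j' hj'] at hf
      have h1 := cl_bounds m hm c' j' hj'
      have h2 := gl_bounds m i hi hev
      omega
    · rw [fm_cre m i hi hev, fm_cre m i' hi' hev'] at hf
      rw [gl_inj m i i' hi hi' hev hev' hf]
  · intro v hv
    obtain ⟨hv1, hv2⟩ := hv
    by_cases c1 : v ≤ m+1
    · exact ⟨ce m 0 (4*(m+1-v)), ce_mem m 0 _ (by omega),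
        by rw [fm_ce m hm _ _ (by omega), cl0, pl]; split_ifs <;> omega⟩
    by_cases c2 : v ≤ 2*m+1
    · exact ⟨ce m 1 (4*(v-(m+2))+3), ce_mem m 1 _ (by omega),
        by rw [fm_ce m hm _ _ (by omega), cl1, ql]; split_ifs <;> omega⟩
    by_cases c3 : v ≤ 3*m+1
    · exact ⟨ce m 1 (4*(v-(2*m+2))+2), ce_mem m 1 _ (by omega),
        by rw [fm_ce m hm _ _ (by omega), cl1, ql]; split_ifs <;> omega⟩
    by_cases c4 : v ≤ 4*m+2
    · exact ⟨ce m 0 (4*(4*m+2-v)+1), ce_mem m 0 _ (by omega),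
        by rw [fm_ce m hm _ _ (by omega), cl0, pl]; split_ifs <;> omega⟩
    by_cases c5 : v ≤ 5*m+2
    · exact ⟨ce m 0 (4*(v-(4*m+3))+2), ce_mem m 0 _ (by omega),
        by rw [fm_ce m hm _ _ (by omega), cl0, pl]; split_ifs <;> omega⟩
    by_cases c6 : v ≤ 6*m+3
    · exact ⟨ce m 1 (4*(6*m+3-v)+1), ce_mem m 1 _ (by omega),
        by rw [fm_ce m hm _ _ (by omega), cl1, ql]; split_ifs <;> omega⟩
    by_cases c7 : v ≤ 7*m+4
    · exact ⟨ce m 1 (4*(7*m+4-v)), ce_mem m 1 _ (by omega),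
        by rw [fm_ce m hm _ _ (by omega), cl1, ql]; split_ifs <;> omega⟩
    by_cases c8 : v ≤ 8*m+4
    · exact ⟨ce m 0 (4*(v-(7*m+5))+3), ce_mem m 0 _ (by omega),
        by rw [fm_ce m hm _ _ (by omega), cl0, pl]; split_ifs <;> omega⟩
    by_cases c9 : (v - (8*m+5)) % 2 = 0
    · exact ⟨cre m (2*(v-(8*m+5))), cre_mem m _ (by omega) (by omega),
        by rw [fm_cre m _ (by omega) (by omega), gl]; split_ifs <;> omega⟩
    · exact ⟨cre m (2*(10*m+5-v)), cre_mem m _ (by omega) (by omega),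
        by rw [fm_cre m _ (by omega) (by omega), gl]; split_ifs <;> omega⟩

lemma edge_ncard (m : ℕ) (hm : 1 ≤ m) : (Pt (2*m)).edgeSet.ncard = 10*m+5 := by
  have h := fm_bijOn m hm
  rw [← Set.ncard_image_of_injOn h.injOn, h.image_eq, ← Finset.coe_Icc,
    Set.ncard_coe_finset, Nat.card_Icc]
  omega
lemma finsum_mem_triple {α M : Type*} [AddCommMonoid M] {f : α → M} {a b c : α}
    (hab : a ≠ b) (hac : a ≠ c) (hbc : b ≠ c) :
    ∑ᶠ i ∈ ({a, b, c} : Set α), f i = f a + f b + f c := by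
  rw [show ({a, b, c} : Set α) = insert a {b, c} from rfl,
    finsum_mem_insert _ (by simp [hab, hac]) ((Set.finite_singleton c).insert b),
    finsum_mem_pair hbc, add_assoc]

lemma fplus_eq {V : Type*} (G : SimpleGraph V) (f : Sym2 V → ℕ) (v : V) :
    fplus G f v = ∑ᶠ w ∈ G.neighborSet v, f s(v, w) := by
  rw [fplus]
  have himg : G.incidenceSet v = (fun w => s(v, w)) '' G.neighborSet v := by
    ext e
    constructor
    · intro he
      induction e using Sym2.ind with
      | _ a b =>
        rcases (G.mk'_mem_incidenceSet_iff).1 he with ⟨hadj, rfl | rfl⟩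
        · exact ⟨b, hadj, rfl⟩
        · exact ⟨a, hadj.symm, Sym2.eq_swap⟩
    · rintro ⟨w, hw, rfl⟩
      exact (G.mk'_mem_incidenceSet_left_iff).2 hw
  rw [himg, finsum_mem_image]
  intro w hw w' hw' h
  exact (Sym2.congr_right).1 h
lemma fm_chain (m : ℕ) {i i' : ℕ} (hi : i < 2*(2*m)+1) (hi' : i' < 2*(2*m)+1)
    (h : i + 1 = i') (c : Fin 2) :
    fm m s(Sum.inl (⟨i, hi⟩, c), Sum.inl (⟨i', hi'⟩, c)) = cl m c i' := by
  rw [fm_mk, lab_inl_inl, lab_inl_inl,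
    if_pos ⟨rfl, by simpa using h⟩, if_neg (by simp; omega), if_neg (by simp; omega),
    Nat.add_zero]

lemma fm_chain' (m : ℕ) {i i' : ℕ} (hi : i < 2*(2*m)+1) (hi' : i' < 2*(2*m)+1)
    (h : i + 1 = i') (c : Fin 2) :
    fm m s(Sum.inl (⟨i', hi'⟩, c), Sum.inl (⟨i, hi⟩, c)) = cl m c i' := by
  rw [Sym2.eq_swap]; exact fm_chain m hi hi' h c

lemma fm_cross (m : ℕ) {i : ℕ} (hi hi' : i < 2*(2*m)+1) :
    fm m s(Sum.inl (⟨i, hi⟩, 0), Sum.inl (⟨i, hi'⟩, 1)) = gl m i := by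
  rw [fm_mk, lab_inl_inl, lab_inl_inl,
    if_neg (by simp), if_pos ⟨rfl, rfl, rfl⟩, if_neg (by simp), if_neg (by simp),
    Nat.add_zero]

lemma fm_cross' (m : ℕ) {i : ℕ} (hi hi' : i < 2*(2*m)+1) :
    fm m s(Sum.inl (⟨i, hi'⟩, 1), Sum.inl (⟨i, hi⟩, 0)) = gl m i := by
  rw [Sym2.eq_swap]; exact fm_cross m hi hi'

lemma fm_inr (m : ℕ) (j : Fin 2) {k : ℕ} (hk : k < 2*(2*m)+1) (c : Fin 2) :
    fm m s(Sum.inr j, Sum.inl (⟨k, hk⟩, c)) =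
      if k = 0 then cl m c 0 else cl m c (4*m+1) := by
  rw [fm_mk, lab_inr_inl, lab_inl_inr, Nat.add_zero]

lemma fm_inr' (m : ℕ) (j : Fin 2) {k : ℕ} (hk : k < 2*(2*m)+1) (c : Fin 2) :
    fm m s(Sum.inl (⟨k, hk⟩, c), Sum.inr j) =
      if k = 0 then cl m c 0 else cl m c (4*m+1) := by
  rw [Sym2.eq_swap]; exact fm_inr m j hk c

/-- The intended vertex colour (= induced vertex sum). -/
def col (m : ℕ) : PtVert (2*m) → ℕ := fun v =>
  match v with
  | Sum.inr _ => 8*m+5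
  | Sum.inl p =>
      if (p.1 : ℕ) % 2 = 1 then 8*m+5
      else if ((p.1 : ℕ)/2 % 2 = 0 ∧ p.2 = 0) ∨ ((p.1 : ℕ)/2 % 2 = 1 ∧ p.2 = 1)
        then 13*m+8 else 21*m+12
lemma fplus_x (m : ℕ) (hm : 1 ≤ m) (j : Fin 2) :
    fplus (Pt (2*m)) (fm m) (Sum.inr j) = 8*m+5 := by
  rw [fplus_eq]
  rcases fin2_cases j with rfl | rfl
  · have hN : (Pt (2*m)).neighborSet (Sum.inr 0) =
        {Sum.inl (⟨0, by omega⟩, 0), Sum.inl (⟨0, by omega⟩, 1)} := by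
      ext w
      rw [SimpleGraph.mem_neighborSet, adj_iff]
      constructor
      · rintro ⟨hne, hr⟩
        match w with
        | Sum.inl q =>
          obtain ⟨⟨qi, hqi⟩, qc⟩ := q
          rcases hr with (⟨h1, h2⟩ | ⟨h1, h2⟩) | h
          · have h2' : qi = 0 := by simpa using h2
            subst h2'
            rcases fin2_cases qc with rfl | rfl
            · left; rfl
            · right; rfl
          · exact absurd h1 (by decide)
          · exact h.elim
        | Sum.inr j' =>
          rcases hr with h | h <;> exact h.elim
      · rintro (rfl | rfl) <;>
          exact ⟨by simp, Or.inl (Or.inl ⟨rfl, rfl⟩)⟩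
    rw [hN, finsum_mem_pair (by simp [Prod.ext_iff, Fin.ext_iff]),
      fm_inr m _ _ 0, fm_inr m _ _ 1, if_pos rfl, if_pos rfl, cl0, cl1]
    rw [pl, ql]; split_ifs <;> omega
  · have hN : (Pt (2*m)).neighborSet (Sum.inr 1) =
        {Sum.inl (⟨4*m, by omega⟩, 0), Sum.inl (⟨4*m, by omega⟩, 1)} := by
      ext w
      rw [SimpleGraph.mem_neighborSet, adj_iff]
      constructor
      · rintro ⟨hne, hr⟩
        match w with
        | Sum.inl q =>
          obtain ⟨⟨qi, hqi⟩, qc⟩ := q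
          rcases hr with (⟨h1, h2⟩ | ⟨h1, h2⟩) | h
          · exact absurd h1 (by decide)
          · have h2' : qi = 4*m := by simp at h2; omega
            subst h2'
            rcases fin2_cases qc with rfl | rfl
            · left; rfl
            · right; rfl
          · exact h.elim
        | Sum.inr j' =>
          rcases hr with h | h <;> exact h.elim
      · rintro (rfl | rfl) <;>
          exact ⟨by simp, Or.inl (Or.inr ⟨rfl, by simp; omega⟩)⟩
    rw [hN, finsum_mem_pair (by simp [Prod.ext_iff, Fin.ext_iff]),
      fm_inr m _ _ 0, fm_inr m _ _ 1, if_neg (by omega), if_neg (by omega), cl0, cl1]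
    rw [pl, ql]; split_ifs <;> omega
lemma col_inl0 (m i : ℕ) (hi : i < 2*(2*m)+1) :
    col m (Sum.inl (⟨i, hi⟩, (0:Fin 2))) =
      if i % 2 = 1 then 8*m+5 else if i/2 % 2 = 0 then 13*m+8 else 21*m+12 := by
  simp [col]

lemma col_inl1 (m i : ℕ) (hi : i < 2*(2*m)+1) :
    col m (Sum.inl (⟨i, hi⟩, (1:Fin 2))) =
      if i % 2 = 1 then 8*m+5 else if i/2 % 2 = 1 then 13*m+8 else 21*m+12 := by
  simp [col]
lemma fplus_inl_odd (m : ℕ) (hm : 1 ≤ m) (i : ℕ) (hi : i < 2*(2*m)+1) (c : Fin 2)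
    (hpar : i % 2 = 1) :
    fplus (Pt (2*m)) (fm m) (Sum.inl (⟨i, hi⟩, c)) = 8*m+5 := by
  rw [fplus_eq]
  have hN : (Pt (2*m)).neighborSet (Sum.inl (⟨i, hi⟩, c)) =
      {Sum.inl (⟨i-1, by omega⟩, c), Sum.inl (⟨i+1, by omega⟩, c)} := by
    ext w
    rw [SimpleGraph.mem_neighborSet, adj_iff]
    constructor
    · rintro ⟨hne, hr⟩
      match w with
      | Sum.inl q =>
        obtain ⟨⟨qi, hqi⟩, qc⟩ := q
        rcases hr with (⟨h1, h2⟩ | ⟨h1, h2, h3, h4⟩) | (⟨h1, h2⟩ | ⟨h1, h2, h3, h4⟩)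
        · obtain rfl := h1
          right
          simp only [Set.mem_singleton_iff, Sum.inl.injEq, Prod.mk.injEq, Fin.mk.injEq]
          have : i + 1 = qi := by simpa using h2
          exact ⟨by omega, trivial⟩
        · have : i % 2 = 0 := by simpa using h2
          omega
        · obtain rfl := h1
          left
          simp only [Sum.inl.injEq, Prod.mk.injEq, Fin.mk.injEq]
          have : qi + 1 = i := by simpa using h2
          exact ⟨by omega, trivial⟩
        · have h1' : qi = i := by simpa [Fin.ext_iff] using h1
          have : qi % 2 = 0 := by simpa using h2
          omega
      | Sum.inr j =>
        rcases hr with h | (⟨h1, h2⟩ | ⟨h1, h2⟩)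
        · exact h.elim
        · have : i = 0 := by simpa using h2
          omega
        · have : i = 2*(2*m) := by simpa using h2
          omega
    · rintro (rfl | rfl)
      · exact ⟨by simp [Prod.ext_iff, Fin.ext_iff] <;> omega,
          Or.inr (Or.inl ⟨rfl, by simp <;> omega⟩)⟩
      · exact ⟨by simp [Prod.ext_iff, Fin.ext_iff] <;> omega,
          Or.inl (Or.inl ⟨rfl, by simp <;> omega⟩)⟩
  rw [hN, finsum_mem_pair (by simp [Prod.ext_iff, Fin.ext_iff] <;> omega),
    fm_chain' m _ _ (by omega) c, fm_chain m _ _ (by omega) c]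
  rcases fin2_cases c with rfl | rfl
  · rw [cl0, cl0, pl]
    rw [pl]; split_ifs <;> omega
  · rw [cl1, cl1, ql]
    rw [ql]; split_ifs <;> omega
lemma fplus_inl_zero0 (m : ℕ) (hm : 1 ≤ m) (hi : (0:ℕ) < 2*(2*m)+1) :
    fplus (Pt (2*m)) (fm m) (Sum.inl (⟨0, hi⟩, (0:Fin 2))) = 13*m+8 := by
  rw [fplus_eq]
  have hN : (Pt (2*m)).neighborSet (Sum.inl (⟨0, hi⟩, (0:Fin 2))) =
      {Sum.inr 0, Sum.inl (⟨1, by omega⟩, 0), Sum.inl (⟨0, hi⟩, 1)} := by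
    ext w
    rw [SimpleGraph.mem_neighborSet, adj_iff]
    constructor
    · rintro ⟨hne, hr⟩
      match w with
      | Sum.inl q =>
        obtain ⟨⟨qi, hqi⟩, qc⟩ := q
        rcases hr with (⟨h1, h2⟩ | ⟨h1, h2, h3, h4⟩) | (⟨h1, h2⟩ | ⟨h1, h2, h3, h4⟩)
        · obtain rfl := h1.symm
          right; left
          have : qi = 1 := by simpa using h2.symm
          simp only [Sum.inl.injEq, Prod.mk.injEq, Fin.mk.injEq]
          exact ⟨this, trivial⟩
        · obtain rfl := h4
          have : qi = 0 := by simpa [Fin.ext_iff] using h1.symm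
          right; right
          simp only [Set.mem_singleton_iff, Sum.inl.injEq, Prod.mk.injEq, Fin.mk.injEq]
          exact ⟨this, trivial⟩
        · have : qi + 1 = 0 := by simpa using h2
          omega
        · simp at h4
      | Sum.inr j =>
        rcases hr with h | (⟨h1, h2⟩ | ⟨h1, h2⟩)
        · exact h.elim
        · obtain rfl := h1
          left; rfl
        · have : (0:ℕ) = 2*(2*m) := by simpa using h2
          omega
    · rintro (rfl | rfl | rfl)
      · exact ⟨by simp, Or.inr (Or.inl ⟨rfl, rfl⟩)⟩
      · exact ⟨by simp [Prod.ext_iff, Fin.ext_iff], Or.inl (Or.inl ⟨rfl, rfl⟩)⟩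
      · exact ⟨by simp [Prod.ext_iff, Fin.ext_iff], Or.inl (Or.inr ⟨rfl, rfl, rfl, rfl⟩)⟩
  rw [hN, finsum_mem_triple (by simp) (by simp)
      (by simp [Prod.ext_iff, Fin.ext_iff]),
    fm_inr' m 0 _ 0, fm_chain m _ _ rfl 0, fm_cross m hi hi,
    if_pos rfl, cl0, cl0]
  norm_num [pl, gl]
  all_goals omega

lemma fplus_inl_zero1 (m : ℕ) (hm : 1 ≤ m) (hi : (0:ℕ) < 2*(2*m)+1) :
    fplus (Pt (2*m)) (fm m) (Sum.inl (⟨0, hi⟩, (1:Fin 2))) = 21*m+12 := by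
  rw [fplus_eq]
  have hN : (Pt (2*m)).neighborSet (Sum.inl (⟨0, hi⟩, (1:Fin 2))) =
      {Sum.inr 0, Sum.inl (⟨1, by omega⟩, 1), Sum.inl (⟨0, hi⟩, 0)} := by
    ext w
    rw [SimpleGraph.mem_neighborSet, adj_iff]
    constructor
    · rintro ⟨hne, hr⟩
      match w with
      | Sum.inl q =>
        obtain ⟨⟨qi, hqi⟩, qc⟩ := q
        rcases hr with (⟨h1, h2⟩ | ⟨h1, h2, h3, h4⟩) | (⟨h1, h2⟩ | ⟨h1, h2, h3, h4⟩)
        · obtain rfl := h1.symm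
          right; left
          have : qi = 1 := by simpa using h2.symm
          simp only [Sum.inl.injEq, Prod.mk.injEq, Fin.mk.injEq]
          exact ⟨this, trivial⟩
        · simp at h3
        · have : qi + 1 = 0 := by simpa using h2
          omega
        · obtain rfl := h3
          have : qi = 0 := by simpa [Fin.ext_iff] using h1
          right; right
          simp only [Set.mem_singleton_iff, Sum.inl.injEq, Prod.mk.injEq, Fin.mk.injEq]
          exact ⟨this, trivial⟩
      | Sum.inr j =>
        rcases hr with h | (⟨h1, h2⟩ | ⟨h1, h2⟩)
        · exact h.elim
        · obtain rfl := h1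
          left; rfl
        · have : (0:ℕ) = 2*(2*m) := by simpa using h2
          omega
    · rintro (rfl | rfl | rfl)
      · exact ⟨by simp, Or.inr (Or.inl ⟨rfl, rfl⟩)⟩
      · exact ⟨by simp [Prod.ext_iff, Fin.ext_iff], Or.inl (Or.inl ⟨rfl, rfl⟩)⟩
      · exact ⟨by simp [Prod.ext_iff, Fin.ext_iff], Or.inr (Or.inr ⟨rfl, rfl, rfl, rfl⟩)⟩
  rw [hN, finsum_mem_triple (by simp) (by simp)
      (by simp [Prod.ext_iff, Fin.ext_iff]),
    fm_inr' m 0 _ 1, fm_chain m _ _ rfl 1, fm_cross' m hi hi,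
    if_pos rfl, cl1, cl1]
  norm_num [ql, gl]
  all_goals omega
lemma fplus_inl_last0 (m : ℕ) (hm : 1 ≤ m) (hi : 4*m < 2*(2*m)+1) :
    fplus (Pt (2*m)) (fm m) (Sum.inl (⟨4*m, hi⟩, (0:Fin 2))) = 13*m+8 := by
  rw [fplus_eq]
  have hN : (Pt (2*m)).neighborSet (Sum.inl (⟨4*m, hi⟩, (0:Fin 2))) =
      {Sum.inl (⟨4*m-1, by omega⟩, 0), Sum.inr 1, Sum.inl (⟨4*m, hi⟩, 1)} := by
    ext w
    rw [SimpleGraph.mem_neighborSet, adj_iff]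
    constructor
    · rintro ⟨hne, hr⟩
      match w with
      | Sum.inl q =>
        obtain ⟨⟨qi, hqi⟩, qc⟩ := q
        rcases hr with (⟨h1, h2⟩ | ⟨h1, h2, h3, h4⟩) | (⟨h1, h2⟩ | ⟨h1, h2, h3, h4⟩)
        · have : 4*m + 1 = qi := by simpa using h2
          omega
        · obtain rfl := h4
          have : qi = 4*m := by simpa [Fin.ext_iff] using h1.symm
          right; right
          simp only [Set.mem_singleton_iff, Sum.inl.injEq, Prod.mk.injEq, Fin.mk.injEq]
          exact ⟨this, trivial⟩
        · obtain rfl := h1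
          left
          have : qi + 1 = 4*m := by simpa using h2
          simp only [Sum.inl.injEq, Prod.mk.injEq, Fin.mk.injEq]
          exact ⟨by omega, trivial⟩
        · simp at h4
      | Sum.inr j =>
        rcases hr with h | (⟨h1, h2⟩ | ⟨h1, h2⟩)
        · exact h.elim
        · have : (4*m:ℕ) = 0 := by simpa using h2
          omega
        · obtain rfl := h1
          right; left; rfl
    · rintro (rfl | rfl | rfl)
      · exact ⟨by simp [Prod.ext_iff, Fin.ext_iff] <;> omega,
          Or.inr (Or.inl ⟨rfl, by simp <;> omega⟩)⟩
      · exact ⟨by simp, Or.inr (Or.inr ⟨rfl, by simp <;> omega⟩)⟩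
      · exact ⟨by simp [Prod.ext_iff, Fin.ext_iff],
          Or.inl (Or.inr ⟨rfl, by simp <;> omega, rfl, rfl⟩)⟩
  rw [hN, finsum_mem_triple (by simp [Prod.ext_iff, Fin.ext_iff] <;> omega) (by simp)
      (by simp),
    fm_chain' m _ _ (by omega) 0, fm_inr' m 1 _ 0, fm_cross m hi hi,
    if_neg (by omega), cl0, cl0]
  unfold pl gl
  split_ifs <;> omega

lemma fplus_inl_last1 (m : ℕ) (hm : 1 ≤ m) (hi : 4*m < 2*(2*m)+1) :
    fplus (Pt (2*m)) (fm m) (Sum.inl (⟨4*m, hi⟩, (1:Fin 2))) = 21*m+12 := by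
  rw [fplus_eq]
  have hN : (Pt (2*m)).neighborSet (Sum.inl (⟨4*m, hi⟩, (1:Fin 2))) =
      {Sum.inl (⟨4*m-1, by omega⟩, 1), Sum.inr 1, Sum.inl (⟨4*m, hi⟩, 0)} := by
    ext w
    rw [SimpleGraph.mem_neighborSet, adj_iff]
    constructor
    · rintro ⟨hne, hr⟩
      match w with
      | Sum.inl q =>
        obtain ⟨⟨qi, hqi⟩, qc⟩ := q
        rcases hr with (⟨h1, h2⟩ | ⟨h1, h2, h3, h4⟩) | (⟨h1, h2⟩ | ⟨h1, h2, h3, h4⟩)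
        · have : 4*m + 1 = qi := by simpa using h2
          omega
        · simp at h3
        · obtain rfl := h1
          left
          have : qi + 1 = 4*m := by simpa using h2
          simp only [Sum.inl.injEq, Prod.mk.injEq, Fin.mk.injEq]
          exact ⟨by omega, trivial⟩
        · obtain rfl := h3
          have : qi = 4*m := by simpa [Fin.ext_iff] using h1
          right; right
          simp only [Set.mem_singleton_iff, Sum.inl.injEq, Prod.mk.injEq, Fin.mk.injEq]
          exact ⟨this, trivial⟩
      | Sum.inr j =>
        rcases hr with h | (⟨h1, h2⟩ | ⟨h1, h2⟩)
        · exact h.elim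
        · have : (4*m:ℕ) = 0 := by simpa using h2
          omega
        · obtain rfl := h1
          right; left; rfl
    · rintro (rfl | rfl | rfl)
      · exact ⟨by simp [Prod.ext_iff, Fin.ext_iff] <;> omega,
          Or.inr (Or.inl ⟨rfl, by simp <;> omega⟩)⟩
      · exact ⟨by simp, Or.inr (Or.inr ⟨rfl, by simp <;> omega⟩)⟩
      · exact ⟨by simp [Prod.ext_iff, Fin.ext_iff],
          Or.inr (Or.inr ⟨rfl, by simp <;> omega, rfl, rfl⟩)⟩
  rw [hN, finsum_mem_triple (by simp [Prod.ext_iff, Fin.ext_iff] <;> omega) (by simp)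
      (by simp),
    fm_chain' m _ _ (by omega) 1, fm_inr' m 1 _ 1, fm_cross' m hi hi,
    if_neg (by omega), cl1, cl1]
  unfold ql gl
  split_ifs <;> omega

lemma fplus_inl_even0 (m : ℕ) (hm : 1 ≤ m) (i : ℕ) (hi : i < 2*(2*m)+1)
    (hpar : i % 2 = 0) (h0 : i ≠ 0) (h4 : i ≠ 4*m) :
    fplus (Pt (2*m)) (fm m) (Sum.inl (⟨i, hi⟩, (0:Fin 2))) =
      if i/2 % 2 = 0 then 13*m+8 else 21*m+12 := by
  rw [fplus_eq]
  have hN : (Pt (2*m)).neighborSet (Sum.inl (⟨i, hi⟩, (0:Fin 2))) =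
      {Sum.inl (⟨i-1, by omega⟩, 0), Sum.inl (⟨i+1, by omega⟩, 0),
       Sum.inl (⟨i, hi⟩, 1)} := by
    ext w
    rw [SimpleGraph.mem_neighborSet, adj_iff]
    constructor
    · rintro ⟨hne, hr⟩
      match w with
      | Sum.inl q =>
        obtain ⟨⟨qi, hqi⟩, qc⟩ := q
        rcases hr with (⟨h1, h2⟩ | ⟨h1, h2, h3, h4'⟩) | (⟨h1, h2⟩ | ⟨h1, h2, h3, h4'⟩)
        · obtain rfl := h1.symm
          right; left
          have : i + 1 = qi := by simpa using h2
          simp only [Sum.inl.injEq, Prod.mk.injEq, Fin.mk.injEq]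
          exact ⟨by omega, trivial⟩
        · obtain rfl := h4'
          have : qi = i := by simpa [Fin.ext_iff] using h1.symm
          right; right
          simp only [Set.mem_singleton_iff, Sum.inl.injEq, Prod.mk.injEq, Fin.mk.injEq]
          exact ⟨this, trivial⟩
        · obtain rfl := h1
          left
          have : qi + 1 = i := by simpa using h2
          simp only [Sum.inl.injEq, Prod.mk.injEq, Fin.mk.injEq]
          exact ⟨by omega, trivial⟩
        · simp at h4'
      | Sum.inr j =>
        rcases hr with h | (⟨h1, h2⟩ | ⟨h1, h2⟩)
        · exact h.elim
        · have : i = 0 := by simpa using h2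
          omega
        · have : i = 2*(2*m) := by simpa using h2
          omega
    · rintro (rfl | rfl | rfl)
      · exact ⟨by simp [Prod.ext_iff, Fin.ext_iff] <;> omega,
          Or.inr (Or.inl ⟨rfl, by simp <;> omega⟩)⟩
      · exact ⟨by simp [Prod.ext_iff, Fin.ext_iff] <;> omega,
          Or.inl (Or.inl ⟨rfl, by simp <;> omega⟩)⟩
      · exact ⟨by simp [Prod.ext_iff, Fin.ext_iff],
          Or.inl (Or.inr ⟨rfl, by simpa using hpar, rfl, rfl⟩)⟩
  rw [hN, finsum_mem_triple (by simp [Prod.ext_iff, Fin.ext_iff] <;> omega)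
      (by simp [Prod.ext_iff, Fin.ext_iff])
      (by simp [Prod.ext_iff, Fin.ext_iff] <;> omega),
    fm_chain' m _ _ (by omega) 0, fm_chain m _ _ rfl 0, fm_cross m hi hi, cl0, cl0]
  unfold pl gl
  split_ifs <;> omega

lemma fplus_inl_even1 (m : ℕ) (hm : 1 ≤ m) (i : ℕ) (hi : i < 2*(2*m)+1)
    (hpar : i % 2 = 0) (h0 : i ≠ 0) (h4 : i ≠ 4*m) :
    fplus (Pt (2*m)) (fm m) (Sum.inl (⟨i, hi⟩, (1:Fin 2))) =
      if i/2 % 2 = 1 then 13*m+8 else 21*m+12 := by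
  rw [fplus_eq]
  have hN : (Pt (2*m)).neighborSet (Sum.inl (⟨i, hi⟩, (1:Fin 2))) =
      {Sum.inl (⟨i-1, by omega⟩, 1), Sum.inl (⟨i+1, by omega⟩, 1),
       Sum.inl (⟨i, hi⟩, 0)} := by
    ext w
    rw [SimpleGraph.mem_neighborSet, adj_iff]
    constructor
    · rintro ⟨hne, hr⟩
      match w with
      | Sum.inl q =>
        obtain ⟨⟨qi, hqi⟩, qc⟩ := q
        rcases hr with (⟨h1, h2⟩ | ⟨h1, h2, h3, h4'⟩) | (⟨h1, h2⟩ | ⟨h1, h2, h3, h4'⟩)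
        · obtain rfl := h1.symm
          right; left
          have : i + 1 = qi := by simpa using h2
          simp only [Sum.inl.injEq, Prod.mk.injEq, Fin.mk.injEq]
          exact ⟨by omega, trivial⟩
        · simp at h3
        · obtain rfl := h1
          left
          have : qi + 1 = i := by simpa using h2
          simp only [Sum.inl.injEq, Prod.mk.injEq, Fin.mk.injEq]
          exact ⟨by omega, trivial⟩
        · obtain rfl := h3
          have : qi = i := by simpa [Fin.ext_iff] using h1
          right; right
          simp only [Set.mem_singleton_iff, Sum.inl.injEq, Prod.mk.injEq, Fin.mk.injEq]
          exact ⟨this, trivial⟩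
      | Sum.inr j =>
        rcases hr with h | (⟨h1, h2⟩ | ⟨h1, h2⟩)
        · exact h.elim
        · have : i = 0 := by simpa using h2
          omega
        · have : i = 2*(2*m) := by simpa using h2
          omega
    · rintro (rfl | rfl | rfl)
      · exact ⟨by simp [Prod.ext_iff, Fin.ext_iff] <;> omega,
          Or.inr (Or.inl ⟨rfl, by simp <;> omega⟩)⟩
      · exact ⟨by simp [Prod.ext_iff, Fin.ext_iff] <;> omega,
          Or.inl (Or.inl ⟨rfl, by simp <;> omega⟩)⟩
      · exact ⟨by simp [Prod.ext_iff, Fin.ext_iff],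
          Or.inr (Or.inr ⟨rfl, by simpa using hpar, rfl, rfl⟩)⟩
  rw [hN, finsum_mem_triple (by simp [Prod.ext_iff, Fin.ext_iff] <;> omega)
      (by simp [Prod.ext_iff, Fin.ext_iff])
      (by simp [Prod.ext_iff, Fin.ext_iff] <;> omega),
    fm_chain' m _ _ (by omega) 1, fm_chain m _ _ rfl 1, fm_cross' m hi hi, cl1, cl1]
  unfold ql gl
  split_ifs <;> omega
lemma fplus_col (m : ℕ) (hm : 1 ≤ m) (v : PtVert (2*m)) :
    fplus (Pt (2*m)) (fm m) v = col m v := by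
  match v with
  | Sum.inr j => rw [fplus_x m hm j]; rfl
  | Sum.inl p =>
    obtain ⟨⟨i, hi⟩, c⟩ := p
    rcases fin2_cases c with rfl | rfl
    · rw [col_inl0]
      by_cases hpar : i % 2 = 1
      · rw [fplus_inl_odd m hm i hi 0 hpar, if_pos hpar]
      · have hp : i % 2 = 0 := by omega
        rw [if_neg hpar]
        by_cases h0 : i = 0
        · subst h0; rw [fplus_inl_zero0 m hm hi, if_pos (by norm_num)]
        · by_cases h4 : i = 4*m
          · subst h4; rw [fplus_inl_last0 m hm hi, if_pos (by omega)]
          · rw [fplus_inl_even0 m hm i hi hp h0 h4]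
    · rw [col_inl1]
      by_cases hpar : i % 2 = 1
      · rw [fplus_inl_odd m hm i hi 1 hpar, if_pos hpar]
      · have hp : i % 2 = 0 := by omega
        rw [if_neg hpar]
        by_cases h0 : i = 0
        · subst h0; rw [fplus_inl_zero1 m hm hi, if_neg (by norm_num)]
        · by_cases h4 : i = 4*m
          · subst h4; rw [fplus_inl_last1 m hm hi, if_neg (by omega)]
          · rw [fplus_inl_even1 m hm i hi hp h0 h4]

lemma range_fplus (m : ℕ) (hm : 1 ≤ m) :
    Set.range (fplus (Pt (2*m)) (fm m)) = {8*m+5, 13*m+8, 21*m+12} := by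
  ext x
  simp only [Set.mem_range]
  constructor
  · rintro ⟨v, rfl⟩
    rw [fplus_col m hm v]
    match v with
    | Sum.inr j => left; rfl
    | Sum.inl p =>
      obtain ⟨⟨i, hi⟩, c⟩ := p
      rcases fin2_cases c with rfl | rfl
      · rw [col_inl0]
        split_ifs
        · left; rfl
        · right; left; rfl
        · right; right; rfl
      · rw [col_inl1]
        split_ifs
        · left; rfl
        · right; left; rfl
        · right; right; rfl
  · rintro (rfl | rfl | rfl)
    · exact ⟨Sum.inr 0, fplus_x m hm 0⟩
    · exact ⟨Sum.inl (⟨0, by omega⟩, 0), fplus_inl_zero0 m hm (by omega)⟩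
    · exact ⟨Sum.inl (⟨0, by omega⟩, 1), fplus_inl_zero1 m hm (by omega)⟩

lemma col_ne_of_adj (m : ℕ) (hm : 1 ≤ m) {u w : PtVert (2*m)}
    (h : (Pt (2*m)).Adj u w) : col m u ≠ col m w := by
  rw [adj_iff] at h
  obtain ⟨hne, hr⟩ := h
  match u, w with
  | Sum.inl p, Sum.inl q =>
    obtain ⟨⟨i, hi⟩, pc⟩ := p
    obtain ⟨⟨qi, hqi⟩, qc⟩ := q
    rcases fin2_cases pc with rfl | rfl <;> rcases fin2_cases qc with rfl | rfl <;>
      [rw [col_inl0 m i hi, col_inl0 m qi hqi];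
       rw [col_inl0 m i hi, col_inl1 m qi hqi];
       rw [col_inl1 m i hi, col_inl0 m qi hqi];
       rw [col_inl1 m i hi, col_inl1 m qi hqi]] <;>
      rcases hr with (⟨h1, h2⟩ | ⟨h1, h2, h3, h4⟩) | (⟨h1, h2⟩ | ⟨h1, h2, h3, h4⟩) <;>
      first
        | (simp at h3; done)
        | (simp at h4; done)
        | (have h2' : i + 1 = qi := by simpa using h2
           split_ifs <;> first | (exact (by assumption : False).elim) | omega)
        | (have h2' : qi + 1 = i := by simpa using h2
           split_ifs <;> first | (exact (by assumption : False).elim) | omega)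
        | (have h1' : i = qi := by simpa [Fin.ext_iff] using h1
           have h2' : i % 2 = 0 := by simpa using h2
           split_ifs <;> first | (exact (by assumption : False).elim) | omega)
        | (have h1' : qi = i := by simpa [Fin.ext_iff] using h1
           have h2' : qi % 2 = 0 := by simpa using h2
           split_ifs <;> first | (exact (by assumption : False).elim) | omega)
  | Sum.inr j, Sum.inl p =>
    obtain ⟨⟨i, hi⟩, pc⟩ := p
    have hcol : col m (Sum.inr j : PtVert (2*m)) = 8*m+5 := rfl
    rcases hr with (⟨h1, h2⟩ | ⟨h1, h2⟩) | h
    · have h2' : i = 0 := by simpa using h2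
      subst h2'
      rw [hcol]
      rcases fin2_cases pc with rfl | rfl <;>
        [rw [col_inl0]; rw [col_inl1]] <;> split_ifs <;>
          first | (exact (by assumption : False).elim) | omega
    · have h2' : i = 2*(2*m) := by simpa using h2
      subst h2'
      rw [hcol]
      rcases fin2_cases pc with rfl | rfl <;>
        [rw [col_inl0]; rw [col_inl1]] <;> split_ifs <;>
          first | (exact (by assumption : False).elim) | omega
    · exact h.elim
  | Sum.inl p, Sum.inr j =>
    obtain ⟨⟨i, hi⟩, pc⟩ := p
    have hcol : col m (Sum.inr j : PtVert (2*m)) = 8*m+5 := rfl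
    rcases hr with h | (⟨h1, h2⟩ | ⟨h1, h2⟩)
    · exact h.elim
    · have h2' : i = 0 := by simpa using h2
      subst h2'
      rw [hcol]
      rcases fin2_cases pc with rfl | rfl <;>
        [rw [col_inl0]; rw [col_inl1]] <;> split_ifs <;>
          first | (exact (by assumption : False).elim) | omega
    · have h2' : i = 2*(2*m) := by simpa using h2
      subst h2'
      rw [hcol]
      rcases fin2_cases pc with rfl | rfl <;>
        [rw [col_inl0]; rw [col_inl1]] <;> split_ifs <;>
          first | (exact (by assumption : False).elim) | omega
  | Sum.inr j, Sum.inr j' =>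
    rcases hr with h | h <;> exact h.elim
/-- For every even `n ≥ 2`, `χ_{la}(Pt(n)) = 3`. -/
theorem chiLA_Pt (n : ℕ) (heven : Even n) (hn : 2 ≤ n) : chiLA (Pt n) = 3 := by
  obtain ⟨m, rfl⟩ : ∃ m, n = 2*m := by
    obtain ⟨r, hr⟩ := heven; exact ⟨r, by omega⟩
  have hm : 1 ≤ m := by omega
  have hcard := edge_ncard m hm
  have hbij := fm_bijOn m hm
  have hla : IsLocalAntimagic (Pt (2*m)) (fm m) := by
    constructor
    · rw [hcard]; exact hbij
    · intro u w hadj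
      rw [fplus_col m hm u, fplus_col m hm w]
      exact col_ne_of_adj m hm hadj
  have h3mem : 3 ∈ {c : ℕ | ∃ f, IsLocalAntimagic (Pt (2*m)) f ∧
      (Set.range (fplus (Pt (2*m)) f)).ncard = c} := by
    refine ⟨fm m, hla, ?_⟩
    have h1 : (8*m+5 : ℕ) ∉ ({13*m+8, 21*m+12} : Set ℕ) := by
      simp only [Set.mem_insert_iff, Set.mem_singleton_iff]
      omega
    have h2 : (13*m+8 : ℕ) ≠ 21*m+12 := by omega
    rw [range_fplus m hm, Set.ncard_insert_of_notMem h1, Set.ncard_pair h2]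
  unfold chiLA
  refine le_antisymm (Nat.sInf_le h3mem) ?_
  apply le_csInf ⟨3, h3mem⟩
  rintro c ⟨f, ⟨hb, hdist⟩, rfl⟩
  have hxu : (Pt (2*m)).Adj (Sum.inr 0) (Sum.inl (⟨0, by omega⟩, 0)) := by
    rw [adj_iff]; exact ⟨by simp, Or.inl (Or.inl ⟨rfl, rfl⟩)⟩
  have hxv : (Pt (2*m)).Adj (Sum.inr 0) (Sum.inl (⟨0, by omega⟩, 1)) := by
    rw [adj_iff]; exact ⟨by simp, Or.inl (Or.inl ⟨rfl, rfl⟩)⟩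
  have huv : (Pt (2*m)).Adj (Sum.inl (⟨0, by omega⟩, (0 : Fin 2)))
      (Sum.inl (⟨0, by omega⟩, (1 : Fin 2))) := by
    rw [adj_iff]
    exact ⟨by simp [Prod.ext_iff, Fin.ext_iff], Or.inl (Or.inr ⟨rfl, rfl, rfl, rfl⟩)⟩
  set G := Pt (2*m)
  set a := fplus G f (Sum.inr 0)
  set b := fplus G f (Sum.inl (⟨0, by omega⟩, (0 : Fin 2)))
  set c' := fplus G f (Sum.inl (⟨0, by omega⟩, (1 : Fin 2)))
  have hsub : ({a, b, c'} : Set ℕ) ⊆ Set.range (fplus G f) := by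
    intro y hy
    simp only [Set.mem_insert_iff, Set.mem_singleton_iff] at hy
    rcases hy with rfl | rfl | rfl
    · exact ⟨_, rfl⟩
    · exact ⟨_, rfl⟩
    · exact ⟨_, rfl⟩
  have hna : a ∉ ({b, c'} : Set ℕ) := by
    simp only [Set.mem_insert_iff, Set.mem_singleton_iff]
    push_neg
    exact ⟨hdist hxu, hdist hxv⟩
  have hcard3 : ({a, b, c'} : Set ℕ).ncard = 3 := by
    rw [Set.ncard_insert_of_notMem hna, Set.ncard_pair (hdist huv)]
  calc (3:ℕ) = ({a, b, c'} : Set ℕ).ncard := hcard3.symm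
    _ ≤ (Set.range (fplus G f)).ncard :=
        Set.ncard_le_ncard hsub (Set.finite_range _)

end LocalAntimagic
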